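/- arXiv:2109.01910 — 2 statements merged into one kernel-verified Lean document; each statement's English description precedes it below -/
import Mathlib

section
/- Let u : [0,L] → ℝ be twice continuously differentiable with u(0)=u(L)=u'(0)=u'(L)=0. Then the sup-norm bound ‖u‖_∞ ≤ √2 · ‖u''‖^{1/4} · ‖u‖^{3/4} holds, where ‖·‖ is the L²(0,L) norm and ‖u‖_∞ = sup_{x∈[0,L]} |u(x)|. -/
open MeasureTheory intervalIntegral Real

/-- Cauchy–Schwarz for interval integrals of continuous functions. -/
lemma cs_interval (f g : ℝ → ℝ) (hf : Continuous f) (hg : Continuous g)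
    (a b : ℝ) (hab : a ≤ b) :
    |∫ x in a..b, f x * g x| ≤
      Real.sqrt (∫ x in a..b, f x ^ 2) * Real.sqrt (∫ x in a..b, g x ^ 2) := by
  set A := ∫ x in a..b, f x ^ 2 with hA
  set B := ∫ x in a..b, f x * g x with hB
  set C := ∫ x in a..b, g x ^ 2 with hC
  have hAnn : 0 ≤ A := intervalIntegral.integral_nonneg hab (fun x _ => sq_nonneg _)
  have hCnn : 0 ≤ C := intervalIntegral.integral_nonneg hab (fun x _ => sq_nonneg _)
  have key : ∀ t : ℝ, 0 ≤ C * (t * t) + (2 * B) * t + A := by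
    intro t
    have h1 : (∫ x in a..b, (t * g x + f x) ^ 2) = C * (t * t) + (2 * B) * t + A := by
      have : ∀ x : ℝ, (t * g x + f x) ^ 2
          = (t * t) * g x ^ 2 + (2 * t) * (f x * g x) + f x ^ 2 := by intro x; ring
      simp only [this]
      rw [intervalIntegral.integral_add, intervalIntegral.integral_add,
        intervalIntegral.integral_const_mul, intervalIntegral.integral_const_mul]
      · ring
      · exact ((continuous_const.mul (hg.pow 2)).intervalIntegrable a b)
      · exact ((continuous_const.mul (hf.mul hg)).intervalIntegrable a b)
      · exact (((continuous_const.mul (hg.pow 2)).add (continuous_const.mul (hf.mul hg))).intervalIntegrable a b)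
      · exact ((hf.pow 2).intervalIntegrable a b)
    rw [← h1]
    exact intervalIntegral.integral_nonneg hab (fun x _ => sq_nonneg _)
  have hd := discrim_le_zero key
  rw [discrim] at hd
  have hB2 : B ^ 2 ≤ A * C := by nlinarith
  calc |B| = Real.sqrt (B ^ 2) := (Real.sqrt_sq_eq_abs B).symm
    _ ≤ Real.sqrt (A * C) := Real.sqrt_le_sqrt hB2
    _ = Real.sqrt A * Real.sqrt C := Real.sqrt_mul hAnn C

/-- Gagliardo–Nirenberg inequality on a bounded interval (Lemma 2.2):
for `u ∈ H²₀(0,L)`, `‖u‖_∞ ≤ √2 ‖u''‖^{1/4} ‖u‖^{3/4}`. -/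
theorem gagliardo_nirenberg_interval (L : ℝ) (hL : 0 < L) (u : ℝ → ℝ)
    (hu : ContDiff ℝ 2 u)
    (hu0 : u 0 = 0) (huL : u L = 0)
    (hu'0 : deriv u 0 = 0) (hu'L : deriv u L = 0) :
    ∀ x ∈ Set.Icc (0:ℝ) L,
      |u x| ≤ Real.sqrt 2 *
        (Real.sqrt (∫ y in (0:ℝ)..L, (deriv (deriv u) y) ^ 2)) ^ ((1:ℝ)/4) *
        (Real.sqrt (∫ y in (0:ℝ)..L, (u y) ^ 2)) ^ ((3:ℝ)/4) := by
  intro x hx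
  obtain ⟨hx0, hxL⟩ := hx
  -- continuity of u, u', u''
  have hc0 : Continuous u := hu.continuous
  have hdiff : Differentiable ℝ u := hu.differentiable two_ne_zero
  have hc1 : Continuous (deriv u) := hu.continuous_deriv one_le_two
  have hu1 : ContDiff ℝ 1 (deriv u) := by
    have := (contDiff_succ_iff_deriv (n := 1)).mp (by exact_mod_cast hu)
    exact this.2.2
  have hdiff1 : Differentiable ℝ (deriv u) := hu1.differentiable one_ne_zero
  have hc2 : Continuous (deriv (deriv u)) := hu1.continuous_deriv le_rfl
  set I0 := ∫ y in (0:ℝ)..L, (u y) ^ 2 with hI0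
  set I1 := ∫ y in (0:ℝ)..L, (deriv u y) ^ 2 with hI1
  set I2 := ∫ y in (0:ℝ)..L, (deriv (deriv u) y) ^ 2 with hI2
  have hI0nn : 0 ≤ I0 := intervalIntegral.integral_nonneg hL.le (fun y _ => sq_nonneg _)
  have hI1nn : 0 ≤ I1 := intervalIntegral.integral_nonneg hL.le (fun y _ => sq_nonneg _)
  -- Step A: integration by parts, I1 = -∫ u u''
  have hibp : (∫ y in (0:ℝ)..L, u y * deriv (deriv u) y)
      = u L * deriv u L - u 0 * deriv u 0 - ∫ y in (0:ℝ)..L, deriv u y * deriv u y := by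
    apply intervalIntegral.integral_mul_deriv_eq_deriv_mul
      (u' := deriv u) (v' := deriv (deriv u))
    · exact fun y _ => (hdiff y).hasDerivAt
    · exact fun y _ => (hdiff1 y).hasDerivAt
    · exact hc1.intervalIntegrable 0 L
    · exact hc2.intervalIntegrable 0 L
  have hI1eq : I1 = -∫ y in (0:ℝ)..L, u y * deriv (deriv u) y := by
    rw [hibp, huL, hu0]
    have : (∫ y in (0:ℝ)..L, deriv u y * deriv u y) = I1 := by
      rw [hI1]; congr 1; ext y; ring
    rw [this]; ring
  have hcs1 := cs_interval u (deriv (deriv u)) hc0 hc2 0 L hL.le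
  have hI1le : I1 ≤ Real.sqrt I0 * Real.sqrt I2 := by
    rw [hI1eq]
    calc -∫ y in (0:ℝ)..L, u y * deriv (deriv u) y
        ≤ |∫ y in (0:ℝ)..L, u y * deriv (deriv u) y| := neg_le_abs _
      _ ≤ Real.sqrt I0 * Real.sqrt I2 := hcs1
  -- Step B: pointwise bound via FTC
  have hftc : (u x) ^ 2 = ∫ y in (0:ℝ)..x, 2 * (u y * deriv u y) := by
    have h := intervalIntegral.integral_deriv_eq_sub
      (f := fun y => u y ^ 2) (a := 0) (b := x)
      (fun y _ => (hdiff y).pow 2)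
      (by
        have : Continuous (fun y => deriv (fun z => u z ^ 2) y) := by
          have heq : (fun y => deriv (fun z => u z ^ 2) y)
              = fun y => 2 * (u y * deriv u y) := by
            ext y
            have := ((hdiff y).hasDerivAt.pow 2).deriv
            simp at this
            rw [show (fun z => u z ^ 2) = u ^ 2 from rfl, this]; ring
          rw [heq]
          exact continuous_const.mul (hc0.mul hc1)
        exact this.intervalIntegrable 0 x)
    simp only [hu0] at h
    have heq : ∀ y : ℝ, deriv (fun z => u z ^ 2) y = 2 * (u y * deriv u y) := by
      intro y
      have := ((hdiff y).hasDerivAt.pow 2).deriv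
      simp at this
      rw [show (fun z => u z ^ 2) = u ^ 2 from rfl, this]; ring
    rw [intervalIntegral.integral_congr (fun y _ => heq y)] at h
    linarith [h]
  have hmono0 : (∫ y in (0:ℝ)..x, (u y) ^ 2) ≤ I0 :=
    intervalIntegral.integral_mono_interval le_rfl hx0 hxL
      (Filter.Eventually.of_forall (fun y => sq_nonneg _))
      ((hc0.pow 2).intervalIntegrable 0 L)
  have hmono1 : (∫ y in (0:ℝ)..x, (deriv u y) ^ 2) ≤ I1 :=
    intervalIntegral.integral_mono_interval le_rfl hx0 hxL
      (Filter.Eventually.of_forall (fun y => sq_nonneg _))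
      ((hc1.pow 2).intervalIntegrable 0 L)
  have hcs2 := cs_interval u (deriv u) hc0 hc1 0 x hx0
  have hux2 : (u x) ^ 2 ≤ 2 * (Real.sqrt I0 * Real.sqrt I1) := by
    rw [hftc, intervalIntegral.integral_const_mul]
    have h1 : (∫ y in (0:ℝ)..x, u y * deriv u y)
        ≤ Real.sqrt (∫ y in (0:ℝ)..x, (u y)^2) * Real.sqrt (∫ y in (0:ℝ)..x, (deriv u y)^2) :=
      (le_abs_self _).trans hcs2
    have h2 : Real.sqrt (∫ y in (0:ℝ)..x, (u y)^2) ≤ Real.sqrt I0 := Real.sqrt_le_sqrt hmono0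
    have h3 : Real.sqrt (∫ y in (0:ℝ)..x, (deriv u y)^2) ≤ Real.sqrt I1 := Real.sqrt_le_sqrt hmono1
    have := mul_le_mul h2 h3 (Real.sqrt_nonneg _) (Real.sqrt_nonneg _)
    nlinarith [Real.sqrt_nonneg (∫ y in (0:ℝ)..x, (u y)^2)]
  -- combine
  set A := Real.sqrt I2 with hAdef
  set B := Real.sqrt I0 with hBdef
  have hAnn : 0 ≤ A := Real.sqrt_nonneg _
  have hBnn : 0 ≤ B := Real.sqrt_nonneg _
  have hsI1 : Real.sqrt I1 ≤ B ^ ((1:ℝ)/2) * A ^ ((1:ℝ)/2) := by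
    calc Real.sqrt I1 ≤ Real.sqrt (B * A) := Real.sqrt_le_sqrt hI1le
      _ = Real.sqrt B * Real.sqrt A := Real.sqrt_mul hBnn A
      _ = B ^ ((1:ℝ)/2) * A ^ ((1:ℝ)/2) := by
          rw [Real.sqrt_eq_rpow, Real.sqrt_eq_rpow]
  have hux2' : (u x) ^ 2 ≤ 2 * A ^ ((1:ℝ)/2) * B ^ ((3:ℝ)/2) := by
    have h1 : (u x)^2 ≤ 2 * (B * (B ^ ((1:ℝ)/2) * A ^ ((1:ℝ)/2))) := by
      have := mul_le_mul_of_nonneg_left hsI1 hBnn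
      nlinarith
    have h2 : B * B ^ ((1:ℝ)/2) = B ^ ((3:ℝ)/2) := by
      rw [show ((3:ℝ)/2) = 1 + (1:ℝ)/2 by norm_num,
        Real.rpow_add' hBnn (by norm_num), Real.rpow_one]
    calc (u x)^2 ≤ 2 * (B * (B ^ ((1:ℝ)/2) * A ^ ((1:ℝ)/2))) := h1
      _ = 2 * A ^ ((1:ℝ)/2) * (B * B ^ ((1:ℝ)/2)) := by ring
      _ = 2 * A ^ ((1:ℝ)/2) * B ^ ((3:ℝ)/2) := by rw [h2]
  have hRHSnn : 0 ≤ Real.sqrt 2 * A ^ ((1:ℝ)/4) * B ^ ((3:ℝ)/4) := by positivity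
  have hsq : (Real.sqrt 2 * A ^ ((1:ℝ)/4) * B ^ ((3:ℝ)/4)) ^ 2
      = 2 * A ^ ((1:ℝ)/2) * B ^ ((3:ℝ)/2) := by
    rw [mul_pow, mul_pow, Real.sq_sqrt (by norm_num : (0:ℝ) ≤ 2),
      ← Real.rpow_natCast (A ^ ((1:ℝ)/4)) 2, ← Real.rpow_natCast (B ^ ((3:ℝ)/4)) 2,
      ← Real.rpow_mul hAnn, ← Real.rpow_mul hBnn]
    norm_num
  have : |u x| ^ 2 ≤ (Real.sqrt 2 * A ^ ((1:ℝ)/4) * B ^ ((3:ℝ)/4)) ^ 2 := by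
    rw [sq_abs, hsq]; exact hux2'
  calc |u x| = Real.sqrt (|u x| ^ 2) := (Real.sqrt_sq (abs_nonneg _)).symm
    _ ≤ Real.sqrt ((Real.sqrt 2 * A ^ ((1:ℝ)/4) * B ^ ((3:ℝ)/4)) ^ 2) := Real.sqrt_le_sqrt this
    _ = Real.sqrt 2 * A ^ ((1:ℝ)/4) * B ^ ((3:ℝ)/4) := Real.sqrt_sq hRHSnn
end

section
/- Let u : [0,∞) → ℝ be twice continuously differentiable with u(0)=u'(0)=0 and with u, u'' square-integrable on (0,∞). Then sup_{x≥0} |u(x)| ≤ √2 · ‖u''‖_{L²(0,∞)}^{1/4} · ‖u‖_{L²(0,∞)}^{3/4}. -/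
open MeasureTheory Real Filter

theorem my_CS {μ : Measure ℝ} {f g : ℝ → ℝ} (hfm : AEStronglyMeasurable f μ)
    (hgm : AEStronglyMeasurable g μ)
    (hf2 : Integrable (fun x => f x ^ 2) μ) (hg2 : Integrable (fun x => g x ^ 2) μ) :
    ∫ x, f x * g x ∂μ ≤ Real.sqrt (∫ x, f x ^ 2 ∂μ) * Real.sqrt (∫ x, g x ^ 2 ∂μ) := by
  have hfg : Integrable (fun x => f x * g x) μ := by
    refine Integrable.mono' ((hf2.add hg2).div_const 2) (hfm.mul hgm) ?_
    filter_upwards with x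
    simp only [Pi.add_apply, Real.norm_eq_abs]
    rw [abs_mul]
    nlinarith [sq_nonneg (|f x| - |g x|), abs_nonneg (f x), abs_nonneg (g x),
      sq_abs (f x), sq_abs (g x), abs_nonneg (f x * g x)]
  have h1 : ∫ x, f x * g x ∂μ ≤ ∫ x, |f x| * |g x| ∂μ := by
    refine integral_mono hfg ?_ (fun x => ?_)
    · simpa [abs_mul] using hfg.abs
    · rw [← abs_mul]; exact le_abs_self _
  have hfmem : MemLp (fun x => |f x|) (ENNReal.ofReal 2) μ := by
    rw [show ENNReal.ofReal 2 = 2 by norm_num]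
    refine (memLp_two_iff_integrable_sq (hfm.norm.congr
      (Filter.Eventually.of_forall fun x => (Real.norm_eq_abs (f x))))).2 ?_
    simpa [sq_abs] using hf2
  have hgmem : MemLp (fun x => |g x|) (ENNReal.ofReal 2) μ := by
    rw [show ENNReal.ofReal 2 = 2 by norm_num]
    refine (memLp_two_iff_integrable_sq (hgm.norm.congr
      (Filter.Eventually.of_forall fun x => (Real.norm_eq_abs (g x))))).2 ?_
    simpa [sq_abs] using hg2
  have h2 := integral_mul_le_Lp_mul_Lq_of_nonneg
    (Real.holderConjugate_iff_eq_conjExponent (by norm_num) |>.2 (by norm_num))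
    (Filter.Eventually.of_forall fun x => abs_nonneg (f x))
    (Filter.Eventually.of_forall fun x => abs_nonneg (g x)) hfmem hgmem
  have e1 : ∀ h : ℝ → ℝ, (∫ x, |h x| ^ (2:ℝ) ∂μ) = ∫ x, h x ^ 2 ∂μ := by
    intro h
    refine integral_congr_ae (Filter.Eventually.of_forall fun x => ?_)
    show |h x| ^ (2:ℝ) = h x ^ 2
    rw [show |h x| ^ (2:ℝ) = |h x| ^ (2:ℕ) from Real.rpow_natCast _ 2, sq_abs]
  rw [e1, e1] at h2
  calc ∫ x, f x * g x ∂μ ≤ ∫ x, |f x| * |g x| ∂μ := h1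
    _ ≤ (∫ x, f x ^ 2 ∂μ) ^ ((1:ℝ)/2) * (∫ x, g x ^ 2 ∂μ) ^ ((1:ℝ)/2) := h2
    _ = _ := by rw [Real.sqrt_eq_rpow, Real.sqrt_eq_rpow]

theorem my_CS_Ioc {f g : ℝ → ℝ} (hf : Continuous f) (hg : Continuous g) {x : ℝ} (hx : 0 ≤ x) :
    ∫ y in (0:ℝ)..x, f y * g y ≤
      Real.sqrt (∫ y in (0:ℝ)..x, f y ^ 2) * Real.sqrt (∫ y in (0:ℝ)..x, g y ^ 2) := by
  rw [intervalIntegral.integral_of_le hx, intervalIntegral.integral_of_le hx,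
    intervalIntegral.integral_of_le hx]
  exact my_CS hf.aestronglyMeasurable.restrict hg.aestronglyMeasurable.restrict
    (hf.pow 2).integrableOn_Ioc (hg.pow 2).integrableOn_Ioc

set_option maxHeartbeats 1600000 in
/-- Gagliardo–Nirenberg inequality on the half-line: for `u ∈ H²(ℝ⁺)` with
`u(0)=u'(0)=0`, `sup_{x≥0} |u(x)| ≤ √2 ‖u''‖^{1/4} ‖u‖^{3/4}`. -/
theorem gagliardo_nirenberg_halfline (u : ℝ → ℝ)
    (hu : ContDiff ℝ 2 u)
    (hu0 : u 0 = 0) (hu'0 : deriv u 0 = 0)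
    (huL2 : IntegrableOn (fun x => (u x) ^ 2) (Set.Ioi 0))
    (hu''L2 : IntegrableOn (fun x => (deriv (deriv u) x) ^ 2) (Set.Ioi 0)) :
    ∀ x : ℝ, 0 ≤ x →
      |u x| ≤ Real.sqrt 2 *
        (Real.sqrt (∫ y in Set.Ioi (0:ℝ), (deriv (deriv u) y) ^ 2)) ^ ((1:ℝ)/4) *
        (Real.sqrt (∫ y in Set.Ioi (0:ℝ), (u y) ^ 2)) ^ ((3:ℝ)/4) := by
  set v := deriv u with hv
  set w := deriv v with hw
  -- basic regularity
  have hud : Differentiable ℝ u := hu.differentiable (by norm_num)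
  have hcv1 : ContDiff ℝ 1 v := by
    have h := (contDiff_succ_iff_deriv (n := 1)).mp (by exact_mod_cast hu)
    exact_mod_cast h.2.2
  have hvd : Differentiable ℝ v := hcv1.differentiable (by norm_num)
  have hcu : Continuous u := hud.continuous
  have hcv : Continuous v := hvd.continuous
  have hcw : Continuous w := by
    have h := (contDiff_succ_iff_deriv (n := 0)).mp (by exact_mod_cast hcv1)
    exact h.2.2.continuous
  have hdu : ∀ x, HasDerivAt u (v x) x := fun x => (hud x).hasDerivAt
  have hdv : ∀ x, HasDerivAt v (w x) x := fun x => (hvd x).hasDerivAt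
  set A := ∫ y in Set.Ioi (0:ℝ), (u y) ^ 2 with hA
  set C := ∫ y in Set.Ioi (0:ℝ), (w y) ^ 2 with hC
  have hA0 : 0 ≤ A := setIntegral_nonneg measurableSet_Ioi fun y _ => sq_nonneg _
  have hC0 : 0 ≤ C := setIntegral_nonneg measurableSet_Ioi fun y _ => sq_nonneg _
  -- FTC identities
  have sq1 : ∀ x : ℝ, 0 ≤ x → u x ^ 2 = ∫ y in (0:ℝ)..x, 2 * (u y * v y) := by
    intro x hx
    have h := intervalIntegral.integral_eq_sub_of_hasDerivAt
      (f := fun y => u y ^ 2) (f' := fun y => 2 * (u y * v y))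
      (fun y _ => by simpa [mul_comm, mul_assoc, mul_left_comm, pow_succ] using (hdu y).fun_pow 2)
      ((Continuous.intervalIntegrable (continuous_const.mul (hcu.mul hcv)) 0 x))
    rw [h]; simp [hu0]
  have sq2 : ∀ x : ℝ, u x * v x = ∫ y in (0:ℝ)..x, (v y ^ 2 + u y * w y) := by
    intro x
    have h := intervalIntegral.integral_eq_sub_of_hasDerivAt
      (f := fun y => u y * v y) (f' := fun y => v y ^ 2 + u y * w y)
      (fun y _ => by
        have := (hdu y).fun_mul (hdv y)
        exact this.congr_deriv (by ring))
      ((Continuous.intervalIntegrable ((hcv.pow 2).add (hcu.mul hcw)) 0 x))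
    rw [h]; simp [hu0]
  have sq3 : ∀ x : ℝ, 0 ≤ x → v x ^ 2 = ∫ y in (0:ℝ)..x, 2 * (v y * w y) := by
    intro x hx
    have h := intervalIntegral.integral_eq_sub_of_hasDerivAt
      (f := fun y => v y ^ 2) (f' := fun y => 2 * (v y * w y))
      (fun y _ => by simpa [mul_comm, mul_assoc, mul_left_comm, pow_succ] using (hdv y).fun_pow 2)
      ((Continuous.intervalIntegrable (continuous_const.mul (hcv.mul hcw)) 0 x))
    rw [h]; simp [hu'0]
  -- local L² bounds
  have hAx : ∀ x : ℝ, 0 ≤ x → (∫ y in (0:ℝ)..x, u y ^ 2) ≤ A := by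
    intro x hx
    rw [intervalIntegral.integral_of_le hx]
    exact setIntegral_mono_set huL2
      (Filter.Eventually.of_forall fun y => sq_nonneg _)
      (HasSubset.Subset.eventuallyLE Set.Ioc_subset_Ioi_self)
  have hCx : ∀ x : ℝ, 0 ≤ x → (∫ y in (0:ℝ)..x, w y ^ 2) ≤ C := by
    intro x hx
    rw [intervalIntegral.integral_of_le hx]
    exact setIntegral_mono_set hu''L2
      (Filter.Eventually.of_forall fun y => sq_nonneg _)
      (HasSubset.Subset.eventuallyLE Set.Ioc_subset_Ioi_self)
  have hBx0 : ∀ x : ℝ, 0 ≤ x → (0:ℝ) ≤ ∫ y in (0:ℝ)..x, v y ^ 2 := fun x h =>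
    intervalIntegral.integral_nonneg h fun y _ => sq_nonneg _
  -- uniform bound on ∫ v² over (0,x)
  have key : ∀ x : ℝ, 0 ≤ x → (∫ y in (0:ℝ)..x, v y ^ 2) ≤ 6 * Real.sqrt A * Real.sqrt C := by
    intro x hx
    set Bx := ∫ y in (0:ℝ)..x, v y ^ 2 with hBx
    have hBxnn := hBx0 x hx
    -- |u x| bound
    have hu_bd : u x ^ 2 ≤ 2 * Real.sqrt A * Real.sqrt Bx := by
      rw [sq1 x hx, intervalIntegral.integral_const_mul]
      have := my_CS_Ioc hcu hcv hx
      have h2 : Real.sqrt (∫ y in (0:ℝ)..x, u y ^ 2) ≤ Real.sqrt A :=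
        Real.sqrt_le_sqrt (hAx x hx)
      nlinarith [Real.sqrt_nonneg Bx, Real.sqrt_nonneg (∫ y in (0:ℝ)..x, u y ^ 2),
        Real.sqrt_nonneg A]
    have hv_bd : v x ^ 2 ≤ 2 * Real.sqrt Bx * Real.sqrt C := by
      rw [sq3 x hx, intervalIntegral.integral_const_mul]
      have := my_CS_Ioc hcv hcw hx
      have h2 : Real.sqrt (∫ y in (0:ℝ)..x, w y ^ 2) ≤ Real.sqrt C :=
        Real.sqrt_le_sqrt (hCx x hx)
      nlinarith [Real.sqrt_nonneg Bx, Real.sqrt_nonneg C,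
        Real.sqrt_nonneg (∫ y in (0:ℝ)..x, w y ^ 2)]
    have huw : (∫ y in (0:ℝ)..x, u y * w y) ≤ Real.sqrt A * Real.sqrt C := by
      have := my_CS_Ioc hcu hcw hx
      have h2 : Real.sqrt (∫ y in (0:ℝ)..x, u y ^ 2) ≤ Real.sqrt A :=
        Real.sqrt_le_sqrt (hAx x hx)
      have h3 : Real.sqrt (∫ y in (0:ℝ)..x, w y ^ 2) ≤ Real.sqrt C :=
        Real.sqrt_le_sqrt (hCx x hx)
      nlinarith [Real.sqrt_nonneg A, Real.sqrt_nonneg C,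
        Real.sqrt_nonneg (∫ y in (0:ℝ)..x, u y ^ 2),
        Real.sqrt_nonneg (∫ y in (0:ℝ)..x, w y ^ 2)]
    -- Bx = u x * v x - ∫ u w
    have hsplit : Bx = u x * v x - ∫ y in (0:ℝ)..x, u y * w y := by
      have h := sq2 x
      have hint : (∫ y in (0:ℝ)..x, (v y ^ 2 + u y * w y)) =
          Bx + ∫ y in (0:ℝ)..x, u y * w y := by
        rw [hBx, ← intervalIntegral.integral_add
          (Continuous.intervalIntegrable (hcv.fun_pow 2) 0 x)
          (Continuous.intervalIntegrable (hcu.fun_mul hcw) 0 x)]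
      rw [hint] at h
      linarith
    have habs : u x * v x ≤ |u x| * |v x| := by
      rw [← abs_mul]; exact le_abs_self _
    have hBle : Bx ≤ |u x| * |v x| + Real.sqrt A * Real.sqrt C := by
      rw [hsplit]
      have : -(∫ y in (0:ℝ)..x, u y * w y) ≤ Real.sqrt A * Real.sqrt C := by
        have := my_CS_Ioc (f := fun y => -u y) hcu.neg hcw hx
        have h2 : Real.sqrt (∫ y in (0:ℝ)..x, (-u y) ^ 2) ≤ Real.sqrt A := by
          refine Real.sqrt_le_sqrt ?_
          simpa using hAx x hx
        have h3 : Real.sqrt (∫ y in (0:ℝ)..x, w y ^ 2) ≤ Real.sqrt C :=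
          Real.sqrt_le_sqrt (hCx x hx)
        have heq : (∫ y in (0:ℝ)..x, -u y * w y) = -(∫ y in (0:ℝ)..x, u y * w y) := by
          rw [← intervalIntegral.integral_neg]; congr 1; ext y; ring
        rw [heq] at this
        nlinarith [Real.sqrt_nonneg A, Real.sqrt_nonneg C,
          Real.sqrt_nonneg (∫ y in (0:ℝ)..x, (-u y) ^ 2),
          Real.sqrt_nonneg (∫ y in (0:ℝ)..x, w y ^ 2)]
      linarith [habs]
    -- now |u x||v x| ≤ 2 (A C)^{1/4} √Bx
    have huv2 : (|u x| * |v x|) ^ 2 ≤ 4 * (Real.sqrt A * Real.sqrt C) * Bx := by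
      have h1 : |u x| ^ 2 = u x ^ 2 := sq_abs _
      have h2 : |v x| ^ 2 = v x ^ 2 := sq_abs _
      have hsB : Real.sqrt Bx ^ 2 = Bx := Real.sq_sqrt hBxnn
      calc (|u x| * |v x|) ^ 2 = u x ^ 2 * v x ^ 2 := by rw [mul_pow, h1, h2]
        _ ≤ (2 * Real.sqrt A * Real.sqrt Bx) * (2 * Real.sqrt Bx * Real.sqrt C) := by
            apply mul_le_mul hu_bd hv_bd (sq_nonneg _)
            positivity
        _ = 4 * (Real.sqrt A * Real.sqrt C) * Bx := by
            linear_combination (4 * Real.sqrt A * Real.sqrt C) * hsB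
    -- conclude via quadratic inequality
    set s := Real.sqrt A * Real.sqrt C with hs
    have hs0 : 0 ≤ s := by positivity
    have hq : Bx ≤ 2 * Real.sqrt s * Real.sqrt Bx + s := by
      have h1 : |u x| * |v x| ≤ 2 * Real.sqrt s * Real.sqrt Bx := by
        have h2 : (|u x| * |v x|) ^ 2 ≤ (2 * Real.sqrt s * Real.sqrt Bx) ^ 2 := by
          have : (2 * Real.sqrt s * Real.sqrt Bx) ^ 2 = 4 * s * Bx := by
            rw [mul_pow, mul_pow, Real.sq_sqrt hs0, Real.sq_sqrt hBxnn]; ring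
          rw [this]; exact huv2
        have h3 : 0 ≤ |u x| * |v x| := by positivity
        have hb : 0 ≤ 2 * Real.sqrt s * Real.sqrt Bx := by positivity
        calc |u x| * |v x| = Real.sqrt ((|u x| * |v x|) ^ 2) := (Real.sqrt_sq h3).symm
          _ ≤ Real.sqrt ((2 * Real.sqrt s * Real.sqrt Bx) ^ 2) := Real.sqrt_le_sqrt h2
          _ = 2 * Real.sqrt s * Real.sqrt Bx := Real.sqrt_sq hb
      linarith [hBle]
    -- t² ≤ 2 √s t + s with t = √Bx ⇒ Bx ≤ 6 s
    have hsB : Real.sqrt Bx ^ 2 = Bx := Real.sq_sqrt hBxnn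
    have hss : Real.sqrt s ^ 2 = s := Real.sq_sqrt hs0
    have h6 : Bx ≤ 6 * s := by
      nlinarith [Real.sqrt_nonneg Bx, Real.sqrt_nonneg s,
        sq_nonneg (Real.sqrt Bx - 3 * Real.sqrt s)]
    rw [hs] at h6
    linarith
  -- v² is integrable on (0,∞)
  have hvL2 : IntegrableOn (fun x => v x ^ 2) (Set.Ioi 0) := by
    refine integrableOn_Ioi_of_intervalIntegral_norm_bounded
      (6 * Real.sqrt A * Real.sqrt C) 0 (b := fun n : ℕ => (n:ℝ)) (l := atTop)
      (fun i => (hcv.pow 2).integrableOn_Ioc) tendsto_natCast_atTop_atTop ?_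
    filter_upwards with n
    have h := key n (Nat.cast_nonneg n)
    calc (∫ y in (0:ℝ)..n, ‖v y ^ 2‖) = ∫ y in (0:ℝ)..n, v y ^ 2 := by
          congr 1; ext y; exact abs_of_nonneg (sq_nonneg _)
      _ ≤ _ := h
  set B := ∫ y in Set.Ioi (0:ℝ), v y ^ 2 with hB
  have hB0 : 0 ≤ B := setIntegral_nonneg measurableSet_Ioi fun y _ => sq_nonneg _
  -- u * w is integrable on (0,∞)
  have huwInt : IntegrableOn (fun x => u x * w x) (Set.Ioi 0) := by
    refine Integrable.mono' ((huL2.add hu''L2).div_const 2)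
      ((hcu.aestronglyMeasurable.restrict).mul (hcw.aestronglyMeasurable.restrict)) ?_
    filter_upwards with x
    simp only [Pi.add_apply, Real.norm_eq_abs]
    rw [abs_mul]
    nlinarith [sq_nonneg (|u x| - |w x|), abs_nonneg (u x), abs_nonneg (w x),
      sq_abs (u x), sq_abs (w x), abs_nonneg (u x * w x)]
  set I := ∫ y in Set.Ioi (0:ℝ), u y * w y with hI
  -- u v tends to B + I at infinity
  have tB : Tendsto (fun x : ℝ => ∫ y in (0:ℝ)..x, v y ^ 2) atTop (nhds B) :=
    intervalIntegral_tendsto_integral_Ioi 0 hvL2 tendsto_id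
  have tI : Tendsto (fun x : ℝ => ∫ y in (0:ℝ)..x, u y * w y) atTop (nhds I) :=
    intervalIntegral_tendsto_integral_Ioi 0 huwInt tendsto_id
  have tUV : Tendsto (fun x : ℝ => u x * v x) atTop (nhds (B + I)) := by
    have : (fun x : ℝ => u x * v x) =
        fun x : ℝ => (∫ y in (0:ℝ)..x, v y ^ 2) + ∫ y in (0:ℝ)..x, u y * w y := by
      ext x
      rw [sq2 x, ← intervalIntegral.integral_add
        (Continuous.intervalIntegrable (hcv.fun_pow 2) 0 x)
        (Continuous.intervalIntegrable (hcu.fun_mul hcw) 0 x)]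
    rw [this]
    exact tB.add tI
  -- FTC between arbitrary points
  have sq1' : ∀ a b : ℝ, u b ^ 2 - u a ^ 2 = ∫ y in a..b, 2 * (u y * v y) := by
    intro a b
    have h := intervalIntegral.integral_eq_sub_of_hasDerivAt
      (f := fun y => u y ^ 2) (f' := fun y => 2 * (u y * v y))
      (fun y _ => by simpa [mul_comm, mul_assoc, mul_left_comm, pow_succ] using (hdu y).fun_pow 2)
      ((Continuous.intervalIntegrable (continuous_const.mul (hcu.mul hcv)) a b))
    rw [h]
  -- the limit must be zero
  have hL : B + I = 0 := by
    set L := B + I with hLdef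
    rcases lt_trichotomy L 0 with hneg | hzero | hpos
    · exfalso
      have hev : ∀ᶠ x : ℝ in atTop, u x * v x < L / 2 :=
        tUV.eventually_lt_const (by linarith)
      obtain ⟨M₀, hM₀⟩ := hev.exists_forall_of_atTop
      set M := max M₀ 0 with hM
      have hMa : ∀ x : ℝ, M ≤ x → u x * v x ≤ L / 2 := fun x hx =>
        (hM₀ x (le_trans (le_max_left _ _) hx)).le
      have hdecay : ∀ x : ℝ, M ≤ x → u x ^ 2 ≤ u M ^ 2 + L * (x - M) := by
        intro x hx
        have h1 := sq1' M x
        have h2 : (∫ y in M..x, 2 * (u y * v y)) ≤ ∫ y in M..x, (L : ℝ) := by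
          refine intervalIntegral.integral_mono_on hx
            (Continuous.intervalIntegrable (continuous_const.mul (hcu.mul hcv)) M x)
            (intervalIntegrable_const) (fun y hy => ?_)
          have := hMa y hy.1
          linarith
        rw [intervalIntegral.integral_const, smul_eq_mul] at h2
        nlinarith
      set x₀ := M + (u M ^ 2 + 1) / (-L) with hx₀
      have hx₀M : M ≤ x₀ := by
        have hnn : 0 ≤ (u M ^ 2 + 1) / (-L) :=
          div_nonneg (by positivity) (by linarith)
        rw [hx₀]
        linarith
      have hdx := hdecay x₀ hx₀M
      have hL0 : L ≠ 0 := ne_of_lt hneg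
      have hLx : L * (x₀ - M) = -(u M ^ 2 + 1) := by
        rw [hx₀,
          show L * (M + (u M ^ 2 + 1) / (-L) - M) =
            (u M ^ 2 + 1) / (-L) * (-L) * (-1) from by ring,
          div_mul_cancel₀ _ (neg_ne_zero.mpr hL0)]
        ring
      nlinarith [sq_nonneg (u x₀)]
    · exact hzero
    · exfalso
      have hev : ∀ᶠ x : ℝ in atTop, L / 2 < u x * v x :=
        tUV.eventually_const_lt (by linarith)
      obtain ⟨M₀, hM₀⟩ := hev.exists_forall_of_atTop
      set M := max M₀ 0 with hM
      have hMa : ∀ x : ℝ, M ≤ x → L / 2 ≤ u x * v x := fun x hx =>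
        (hM₀ x (le_trans (le_max_left _ _) hx)).le
      have hgrow : ∀ x : ℝ, M ≤ x → L * (x - M) ≤ u x ^ 2 := by
        intro x hx
        have h1 := sq1' M x
        have h2 : (∫ y in M..x, (L : ℝ)) ≤ ∫ y in M..x, 2 * (u y * v y) := by
          refine intervalIntegral.integral_mono_on hx
            (intervalIntegrable_const)
            (Continuous.intervalIntegrable (continuous_const.mul (hcu.mul hcv)) M x)
            (fun y hy => ?_)
          have := hMa y hy.1
          linarith
        rw [intervalIntegral.integral_const, smul_eq_mul] at h2
        nlinarith [sq_nonneg (u M)]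
      set M' := M + 2 / L with hM'
      have hM'pos : 0 < M' := by
        have h1 : (0:ℝ) ≤ M := le_max_right _ _
        have h2 : 0 < 2 / L := by positivity
        rw [hM']
        linarith
      have hone : ∀ x : ℝ, x ∈ Set.Ioi M' → (1:ℝ) ≤ u x ^ 2 := by
        intro x hx
        simp only [Set.mem_Ioi] at hx
        have h2L : 0 < 2 / L := by positivity
        have hMx : M ≤ x := by
          have : M + 2 / L ≤ x := by rw [← hM']; exact hx.le
          linarith
        have hg := hgrow x hMx
        have h2' : 2 ≤ L * (x - M) := by
          have hxM : 2 / L ≤ x - M := by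
            have : M + 2 / L ≤ x := by rw [← hM']; exact hx.le
            linarith
          calc (2:ℝ) = L * (2 / L) := by field_simp
            _ ≤ L * (x - M) := mul_le_mul_of_nonneg_left hxM hpos.le
        linarith
      have hsub : Set.Ioi M' ⊆ Set.Ioi (0:ℝ) := fun y hy => lt_trans hM'pos hy
      have hint1 : IntegrableOn (fun x => u x ^ 2) (Set.Ioi M') := huL2.mono_set hsub
      have hconst : Integrable (fun _ : ℝ => (1:ℝ)) (volume.restrict (Set.Ioi M')) := by
        refine hint1.mono' aestronglyMeasurable_const ?_
        refine (ae_restrict_iff' measurableSet_Ioi).2 (Filter.Eventually.of_forall ?_)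
        intro x hx
        rw [norm_one]
        exact hone x hx
      have hcc := (integrable_const_iff (c := (1:ℝ))).1 hconst
      rcases hcc with h | h
      · norm_num at h
      · have h := h.measure_univ_lt_top
        rw [Measure.restrict_apply_univ, Real.volume_Ioi] at h
        exact (lt_irrefl _ h).elim
  -- B ≤ √A √C
  have hBle : B ≤ Real.sqrt A * Real.sqrt C := by
    have hIneg : B = -I := by linarith
    have hICS : -I ≤ Real.sqrt A * Real.sqrt C := by
      have hCS := my_CS (μ := volume.restrict (Set.Ioi 0))
        (f := fun y => -u y) (g := w)
        (hcu.neg.aestronglyMeasurable.restrict) (hcw.aestronglyMeasurable.restrict)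
        (by simp only [neg_sq]; exact huL2) hu''L2
      have heq : (∫ y in Set.Ioi (0:ℝ), -u y * w y) = -I := by
        rw [hI, ← integral_neg]
        refine integral_congr_ae (Filter.Eventually.of_forall fun y => ?_)
        ring
      have heq2 : (∫ y in Set.Ioi (0:ℝ), (-u y) ^ 2) = A := by
        rw [hA]
        refine integral_congr_ae (Filter.Eventually.of_forall fun y => ?_)
        ring
      rw [heq, heq2] at hCS
      exact hCS
    linarith
  -- final estimate
  intro x hx
  have hfinal : u x ^ 2 ≤ 2 * Real.sqrt A * Real.sqrt B := by
    rw [sq1 x hx, intervalIntegral.integral_const_mul]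
    have hcs := my_CS_Ioc hcu hcv hx
    have h2 : Real.sqrt (∫ y in (0:ℝ)..x, u y ^ 2) ≤ Real.sqrt A :=
      Real.sqrt_le_sqrt (hAx x hx)
    have h3 : Real.sqrt (∫ y in (0:ℝ)..x, v y ^ 2) ≤ Real.sqrt B := by
      refine Real.sqrt_le_sqrt ?_
      rw [intervalIntegral.integral_of_le hx]
      exact setIntegral_mono_set hvL2
        (Filter.Eventually.of_forall fun y => sq_nonneg _)
        (HasSubset.Subset.eventuallyLE Set.Ioc_subset_Ioi_self)
    nlinarith [Real.sqrt_nonneg A, Real.sqrt_nonneg B,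
      Real.sqrt_nonneg (∫ y in (0:ℝ)..x, u y ^ 2),
      Real.sqrt_nonneg (∫ y in (0:ℝ)..x, v y ^ 2)]
  have hsb : Real.sqrt B ≤ (Real.sqrt A) ^ ((1:ℝ)/2) * (Real.sqrt C) ^ ((1:ℝ)/2) := by
    rw [show (Real.sqrt A) ^ ((1:ℝ)/2) = Real.sqrt (Real.sqrt A) from
        (Real.sqrt_eq_rpow _).symm,
      show (Real.sqrt C) ^ ((1:ℝ)/2) = Real.sqrt (Real.sqrt C) from
        (Real.sqrt_eq_rpow _).symm,
      ← Real.sqrt_mul (Real.sqrt_nonneg A)]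
    exact Real.sqrt_le_sqrt hBle
  have h3 : (Real.sqrt A) ^ ((3:ℝ)/2) = Real.sqrt A * (Real.sqrt A) ^ ((1:ℝ)/2) := by
    rw [show (3:ℝ)/2 = 1 + 1/2 by norm_num,
      Real.rpow_add' (Real.sqrt_nonneg A) (by norm_num), Real.rpow_one]
  have hmain : u x ^ 2 ≤ 2 * (Real.sqrt C) ^ ((1:ℝ)/2) * (Real.sqrt A) ^ ((3:ℝ)/2) := by
    calc u x ^ 2 ≤ 2 * Real.sqrt A * Real.sqrt B := hfinal
      _ ≤ 2 * Real.sqrt A * ((Real.sqrt A) ^ ((1:ℝ)/2) * (Real.sqrt C) ^ ((1:ℝ)/2)) := by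
          apply mul_le_mul_of_nonneg_left hsb
          positivity
      _ = 2 * (Real.sqrt C) ^ ((1:ℝ)/2) * (Real.sqrt A) ^ ((3:ℝ)/2) := by
          rw [h3]; ring
  have hRHS : (Real.sqrt 2 * (Real.sqrt C) ^ ((1:ℝ)/4) * (Real.sqrt A) ^ ((3:ℝ)/4)) ^ 2 =
      2 * (Real.sqrt C) ^ ((1:ℝ)/2) * (Real.sqrt A) ^ ((3:ℝ)/2) := by
    rw [mul_pow, mul_pow, Real.sq_sqrt (by norm_num : (0:ℝ) ≤ 2),
      ← Real.rpow_natCast ((Real.sqrt C) ^ ((1:ℝ)/4)) 2,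
      ← Real.rpow_natCast ((Real.sqrt A) ^ ((3:ℝ)/4)) 2,
      ← Real.rpow_mul (Real.sqrt_nonneg C), ← Real.rpow_mul (Real.sqrt_nonneg A)]
    norm_num
  have hfin : u x ^ 2 ≤
      (Real.sqrt 2 * (Real.sqrt C) ^ ((1:ℝ)/4) * (Real.sqrt A) ^ ((3:ℝ)/4)) ^ 2 := by
    rw [hRHS]; exact hmain
  calc |u x| = Real.sqrt (u x ^ 2) := (Real.sqrt_sq_eq_abs _).symm
    _ ≤ Real.sqrt ((Real.sqrt 2 * (Real.sqrt C) ^ ((1:ℝ)/4) * (Real.sqrt A) ^ ((3:ℝ)/4)) ^ 2) :=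
        Real.sqrt_le_sqrt hfin
    _ = Real.sqrt 2 * (Real.sqrt C) ^ ((1:ℝ)/4) * (Real.sqrt A) ^ ((3:ℝ)/4) := by
        apply Real.sqrt_sq
        positivity
end
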